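/- There is a universal constant C such that the following holds. Let A>0 and let g:ℝ³×ℝ³→ℝ satisfy |g(y,w)| ≤ A⟨y,w⟩^{−10} for all y,w∈ℝ³. Let t≥0, x∈ℝ³, and let Y,W:ℝ³→ℝ³ be any measurable functions with |Y(v)| ≤ 1 and |W(v)| ≤ 1 for all v. Then ∫_{ℝ³} |g( x−tv+Y(v), v+W(v) )| ⟨v⟩² dv ≤ C A ⟨t,x⟩^{−3}. -/

import Mathlib

open MeasureTheory Real

noncomputable section

abbrev E3 := EuclideanSpace ℝ (Fin 3)

/-- The space-time Japanese bracket `⟨t,x⟩ = (1+t²+|x|²)^{1/2}`. -/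
def jtx (t : ℝ) (x : E3) : ℝ := Real.sqrt (1 + t ^ 2 + ‖x‖ ^ 2)

/-- The Japanese bracket `⟨v⟩ = (1+|v|²)^{1/2}`. -/
def jv (v : E3) : ℝ := Real.sqrt (1 + ‖v‖ ^ 2)

/-- The phase-space Japanese bracket `⟨y,w⟩ = (1+|y|²+|w|²)^{1/2}`. -/
def jxv (y w : E3) : ℝ := Real.sqrt (1 + ‖y‖ ^ 2 + ‖w‖ ^ 2)

namespace Stmt3Aux

lemma one_le_jv (v : E3) : 1 ≤ jv v := by
  rw [jv]
  have h := Real.sqrt_le_sqrt (show (1:ℝ) ≤ 1 + ‖v‖^2 by nlinarith [sq_nonneg ‖v‖])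
  rwa [Real.sqrt_one] at h

lemma jv_pos (v : E3) : 0 < jv v := lt_of_lt_of_le one_pos (one_le_jv v)

lemma norm_le_jv (v : E3) : ‖v‖ ≤ jv v := by
  rw [jv]
  calc ‖v‖ = Real.sqrt (‖v‖^2) := (Real.sqrt_sq (norm_nonneg v)).symm
    _ ≤ _ := Real.sqrt_le_sqrt (by nlinarith)

lemma one_le_jtx (t : ℝ) (x : E3) : 1 ≤ jtx t x := by
  rw [jtx]
  have h := Real.sqrt_le_sqrt
    (show (1:ℝ) ≤ 1 + t^2 + ‖x‖^2 by nlinarith [sq_nonneg t, sq_nonneg ‖x‖])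
  rwa [Real.sqrt_one] at h

lemma jtx_pos (t : ℝ) (x : E3) : 0 < jtx t x := lt_of_lt_of_le one_pos (one_le_jtx t x)

lemma jxv_pos (y w : E3) : 0 < jxv y w := Real.sqrt_pos.mpr (by positivity)

lemma jv_le_jxv_left (y w : E3) : jv y ≤ jxv y w := by
  rw [jv, jxv]; exact Real.sqrt_le_sqrt (by nlinarith [sq_nonneg ‖w‖])

lemma jv_le_jxv_right (y w : E3) : jv w ≤ jxv y w := by
  rw [jv, jxv]; exact Real.sqrt_le_sqrt (by nlinarith [sq_nonneg ‖y‖])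

lemma jv_shift (a e : E3) (he : ‖e‖ ≤ 1) : jv a ≤ 2 * jv (a + e) := by
  have h1 : ‖a‖ ≤ ‖a + e‖ + 1 := by
    have h2 : a = (a + e) + (-e) := by abel
    calc ‖a‖ = ‖(a + e) + (-e)‖ := by rw [← h2]
      _ ≤ ‖a + e‖ + ‖-e‖ := norm_add_le _ _
      _ ≤ ‖a + e‖ + 1 := by rw [norm_neg]; linarith
  have h4 : (2:ℝ) = Real.sqrt 4 := by
    rw [show (4:ℝ) = 2^2 by norm_num, Real.sqrt_sq (by norm_num)]
  rw [jv, jv, h4, ← Real.sqrt_mul (by norm_num)]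
  apply Real.sqrt_le_sqrt
  have h5 : ‖a‖^2 ≤ (‖a + e‖ + 1)^2 := by
    have := norm_nonneg a
    nlinarith
  nlinarith [norm_nonneg (a + e), sq_nonneg (‖a + e‖ - 1)]

lemma jtx_le (t : ℝ) (ht : 0 ≤ t) (x : E3) : jtx t x ≤ 1 + t + ‖x‖ := by
  rw [jtx, show (1 + t + ‖x‖) = Real.sqrt ((1 + t + ‖x‖)^2) from
    (Real.sqrt_sq (by positivity)).symm]
  apply Real.sqrt_le_sqrt
  nlinarith [norm_nonneg x]

lemma inv_helper {a b c : ℝ} (ha : 0 < a) (hb : 0 < b) (h : a ≤ c * b) : b⁻¹ ≤ c * a⁻¹ := by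
  have h1 : a / b ≤ c := (div_le_iff₀ hb).mpr h
  calc b⁻¹ = a⁻¹ * (a / b) := by field_simp
    _ ≤ a⁻¹ * c := mul_le_mul_of_nonneg_left h1 (inv_nonneg.mpr ha.le)
    _ = c * a⁻¹ := mul_comm _ _

lemma rpow_neg_nat {x : ℝ} (hx : 0 < x) (n : ℕ) : x ^ (-(n:ℝ)) = (x ^ n)⁻¹ := by
  rw [Real.rpow_neg hx.le, Real.rpow_natCast]

/-- integrability of `⟨v⟩⁻⁵` on `ℝ³`. -/
lemma integrable_jv5 : Integrable (fun v : E3 => ((jv v) ^ (5:ℕ))⁻¹) := by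
  have h := integrable_rpow_neg_one_add_norm_sq (E := E3) (μ := volume) (r := 5) (by simp; norm_num)
  convert h using 2 with v
  rw [jv, Real.sqrt_eq_rpow,
    ← Real.rpow_natCast ((1 + ‖v‖^2) ^ ((1:ℝ)/2)) 5,
    ← Real.rpow_mul (by positivity), ← Real.rpow_neg (by positivity)]
  norm_num

end Stmt3Aux

open Stmt3Aux

set_option maxHeartbeats 1000000

/-- There is a universal constant `C` such that: if `A > 0`,
`|g(y,w)| ≤ A⟨y,w⟩^{−10}`, `t ≥ 0`, `x ∈ ℝ³`, and `Y, W : ℝ³ → ℝ³` are measurable with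
`|Y(v)| ≤ 1`, `|W(v)| ≤ 1`, then
`∫_{ℝ³} |g(x−tv+Y(v), v+W(v))| ⟨v⟩² dv ≤ C A ⟨t,x⟩^{−3}`. -/
theorem stmt3 :
    ∃ C : ℝ, 0 < C ∧
      ∀ (A : ℝ), 0 < A → ∀ g : E3 → E3 → ℝ,
        (∀ y w : E3, |g y w| ≤ A * jxv y w ^ (-(10:ℝ))) →
        ∀ t : ℝ, 0 ≤ t → ∀ x : E3, ∀ Y W : E3 → E3,
          Measurable Y → Measurable W →
          (∀ v : E3, ‖Y v‖ ≤ 1) → (∀ v : E3, ‖W v‖ ≤ 1) →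
          (∫ v : E3, |g (x - t • v + Y v) (v + W v)| * jv v ^ 2) ≤
            C * A * jtx t x ^ (-(3:ℝ)) := by
  classical
  set φ : E3 → ℝ := fun u => ((jv u) ^ (5:ℕ))⁻¹ with hφdef
  have hφint : Integrable φ := integrable_jv5
  set I : ℝ := ∫ v : E3, φ v with hIdef
  have hInn : 0 ≤ I := integral_nonneg fun v => inv_nonneg.mpr (pow_nonneg (jv_pos v).le 5)
  refine ⟨2^17 * I + 1, by linarith, ?_⟩
  intro A hA g hg t ht x Y W _ _ hYb hWb
  have hT1 : (1:ℝ) ≤ jtx t x := one_le_jtx t x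
  have hTpos : 0 < jtx t x := jtx_pos t x
  have hTrw : jtx t x ^ (-(3:ℝ)) = ((jtx t x) ^ (3:ℕ))⁻¹ := by
    rw [show (-(3:ℝ)) = -((3:ℕ):ℝ) by norm_num]; exact rpow_neg_nat hTpos 3
  rw [hTrw]
  set T := jtx t x with hTdef
  have hT3pos : 0 < T ^ (3:ℕ) := pow_pos hTpos 3
  -- base pointwise bound with a flexible splitting of the decay
  have hbase : ∀ (a c : ℕ), a + c = 8 → ∀ v : E3,
      |g (x - t • v + Y v) (v + W v)| * jv v ^ 2 ≤
        2^10 * A * ((jv (x - t • v)) ^ a * (jv v) ^ c)⁻¹ := by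
    intro a c hac v
    set y' := x - t • v + Y v with hy'
    set w' := v + W v with hw'
    set D := jv (x - t • v) with hD
    set V := jv v with hV
    have hDpos : 0 < D := jv_pos _
    have hVpos : 0 < V := jv_pos _
    have hJ : 0 < jxv y' w' := jxv_pos _ _
    have hDj : D ≤ 2 * jxv y' w' :=
      le_trans (jv_shift _ _ (hYb v)) (by nlinarith [jv_le_jxv_left y' w', jv_pos y'])
    have hVj : V ≤ 2 * jxv y' w' :=
      le_trans (jv_shift _ _ (hWb v)) (by nlinarith [jv_le_jxv_right y' w', jv_pos w'])
    have hgb : |g y' w'| ≤ A * ((jxv y' w') ^ (10:ℕ))⁻¹ := by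
      have h := hg y' w'
      rwa [show (-(10:ℝ)) = -((10:ℕ):ℝ) by norm_num, rpow_neg_nat hJ 10] at h
    have hprod : D ^ a * V ^ (c + 2) ≤ 2^10 * (jxv y' w') ^ (10:ℕ) := by
      have h1 : D ^ a ≤ (2 * jxv y' w') ^ a := pow_le_pow_left₀ hDpos.le hDj a
      have h2 : V ^ (c+2) ≤ (2 * jxv y' w') ^ (c+2) := pow_le_pow_left₀ hVpos.le hVj (c+2)
      calc D ^ a * V ^ (c+2) ≤ (2 * jxv y' w') ^ a * (2 * jxv y' w') ^ (c+2) :=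
            mul_le_mul h1 h2 (pow_nonneg hVpos.le _)
              (pow_nonneg (mul_nonneg (by norm_num) hJ.le) _)
        _ = (2 * jxv y' w') ^ (10:ℕ) := by rw [← pow_add]; congr 1; omega
        _ = 2^10 * (jxv y' w') ^ (10:ℕ) := by rw [mul_pow]
    have hPnn : (0:ℝ) ≤ (D ^ a * V ^ c)⁻¹ :=
      inv_nonneg.mpr (mul_nonneg (pow_nonneg hDpos.le _) (pow_nonneg hVpos.le _))
    have hkey : ((jxv y' w') ^ (10:ℕ))⁻¹ * V ^ 2 ≤ 2^10 * (D ^ a * V ^ c)⁻¹ := by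
      rw [inv_mul_eq_div, div_le_iff₀ (pow_pos hJ 10)]
      have h3 : V ^ 2 = (D ^ a * V ^ c)⁻¹ * (D ^ a * V ^ (c+2)) := by
        rw [pow_add]; field_simp
      rw [h3]
      calc (D^a * V^c)⁻¹ * (D^a * V^(c+2))
          ≤ (D^a * V^c)⁻¹ * (2^10 * (jxv y' w') ^ (10:ℕ)) :=
            mul_le_mul_of_nonneg_left hprod hPnn
        _ = 2^10 * (D^a * V^c)⁻¹ * (jxv y' w') ^ (10:ℕ) := by ring
    calc |g y' w'| * V ^ 2 ≤ (A * ((jxv y' w') ^ (10:ℕ))⁻¹) * V ^ 2 :=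
          mul_le_mul_of_nonneg_right hgb (by positivity)
      _ = A * (((jxv y' w') ^ (10:ℕ))⁻¹ * V ^ 2) := by ring
      _ ≤ A * (2^10 * (D ^ a * V ^ c)⁻¹) := mul_le_mul_of_nonneg_left hkey hA.le
      _ = 2^10 * A * (D ^ a * V ^ c)⁻¹ := by ring
  -- pointwise bound by an integrable profile
  have hpt : ∀ v : E3, |g (x - t • v + Y v) (v + W v)| * jv v ^ 2 ≤
      2^16 * A * (T ^ (3:ℕ))⁻¹ *
        (((jv v) ^ (5:ℕ))⁻¹ + t^3 * ((jv (x - t • v)) ^ (5:ℕ))⁻¹) := by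
    intro v
    set D := jv (x - t • v) with hD
    set V := jv v with hV
    have hD1 : 1 ≤ D := one_le_jv _
    have hV1 : 1 ≤ V := one_le_jv _
    have hDpos : 0 < D := jv_pos _
    have hVpos : 0 < V := jv_pos _
    have hTb : T ≤ 1 + D + 2 * (t * V) := by
      have h1 : T ≤ 1 + t + ‖x‖ := jtx_le t ht x
      have h2 : ‖x‖ ≤ ‖x - t • v‖ + t * ‖v‖ := by
        calc ‖x‖ = ‖(x - t • v) + t • v‖ := by rw [sub_add_cancel]
          _ ≤ ‖x - t • v‖ + ‖t • v‖ := norm_add_le _ _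
          _ = ‖x - t • v‖ + t * ‖v‖ := by rw [norm_smul, Real.norm_of_nonneg ht]
      have h3 : ‖x - t • v‖ ≤ D := norm_le_jv _
      have h4 : ‖v‖ ≤ V := norm_le_jv _
      have h5 : t ≤ t * V := by nlinarith
      nlinarith [norm_nonneg v, mul_le_mul_of_nonneg_left h4 ht]
    suffices hmid : ∃ a c : ℕ, a + c = 8 ∧ (D ^ a * V ^ c)⁻¹ ≤
        64 * (T ^ (3:ℕ))⁻¹ * ((V ^ (5:ℕ))⁻¹ + t^3 * (D ^ (5:ℕ))⁻¹) by
      obtain ⟨a, c, hac, hm⟩ := hmid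
      calc |g (x - t • v + Y v) (v + W v)| * jv v ^ 2
          ≤ 2^10 * A * (D ^ a * V ^ c)⁻¹ := hbase a c hac v
        _ ≤ 2^10 * A * (64 * (T ^ (3:ℕ))⁻¹ * ((V ^ (5:ℕ))⁻¹ + t^3 * (D ^ (5:ℕ))⁻¹)) :=
            mul_le_mul_of_nonneg_left hm (mul_nonneg (by norm_num) hA.le)
        _ = 2^16 * A * (T ^ (3:ℕ))⁻¹ * ((V ^ (5:ℕ))⁻¹ + t^3 * (D ^ (5:ℕ))⁻¹) := by ring
    have hD5 : (0:ℝ) ≤ (D ^ (5:ℕ))⁻¹ := inv_nonneg.mpr (pow_nonneg hDpos.le 5)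
    have hV5 : (0:ℝ) ≤ (V ^ (5:ℕ))⁻¹ := inv_nonneg.mpr (pow_nonneg hVpos.le 5)
    have hTi : (0:ℝ) ≤ (T ^ (3:ℕ))⁻¹ := inv_nonneg.mpr hT3pos.le
    have hsum2 : 0 ≤ t^3 * (D ^ (5:ℕ))⁻¹ := mul_nonneg (pow_nonneg ht 3) hD5
    have hsum1 : 0 ≤ ((V:ℝ) ^ (5:ℕ))⁻¹ := hV5
    have hcaseD : T ≤ 4 * D → (D ^ (3:ℕ) * V ^ (5:ℕ))⁻¹ ≤
        64 * (T ^ (3:ℕ))⁻¹ * ((V ^ (5:ℕ))⁻¹ + t^3 * (D ^ (5:ℕ))⁻¹) := by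
      intro hT4
      have hcube : T ^ (3:ℕ) ≤ 64 * D ^ (3:ℕ) := by
        have := pow_le_pow_left₀ hTpos.le hT4 3
        calc T ^ (3:ℕ) ≤ (4 * D) ^ (3:ℕ) := this
          _ = 64 * D ^ (3:ℕ) := by ring
      have hinv : (D ^ (3:ℕ))⁻¹ ≤ 64 * (T ^ (3:ℕ))⁻¹ :=
        inv_helper hT3pos (pow_pos hDpos 3) hcube
      calc (D ^ (3:ℕ) * V ^ (5:ℕ))⁻¹ = (D ^ (3:ℕ))⁻¹ * (V ^ (5:ℕ))⁻¹ := by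
            rw [mul_inv]
        _ ≤ 64 * (T ^ (3:ℕ))⁻¹ * (V ^ (5:ℕ))⁻¹ :=
            mul_le_mul_of_nonneg_right hinv hV5
        _ ≤ 64 * (T ^ (3:ℕ))⁻¹ * ((V ^ (5:ℕ))⁻¹ + t^3 * (D ^ (5:ℕ))⁻¹) :=
            mul_le_mul_of_nonneg_left (le_add_of_nonneg_right hsum2)
              (mul_nonneg (by norm_num) hTi)
    rcases le_total t 1 with ht1 | ht1
    · rcases le_total D V with hc | hc
      · -- velocity bracket dominates
        refine ⟨0, 8, by norm_num, ?_⟩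
        have hT4 : T ≤ 4 * V := by nlinarith
        have hcube : T ^ (3:ℕ) ≤ 64 * V ^ (3:ℕ) := by
          have := pow_le_pow_left₀ hTpos.le hT4 3
          calc T ^ (3:ℕ) ≤ (4 * V) ^ (3:ℕ) := this
            _ = 64 * V ^ (3:ℕ) := by ring
        have hinv : (V ^ (3:ℕ))⁻¹ ≤ 64 * (T ^ (3:ℕ))⁻¹ :=
          inv_helper hT3pos (pow_pos hVpos 3) hcube
        rw [pow_zero, one_mul]
        calc ((V:ℝ) ^ (8:ℕ))⁻¹ = (V ^ (3:ℕ))⁻¹ * (V ^ (5:ℕ))⁻¹ := by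
              rw [← mul_inv, ← pow_add]
          _ ≤ 64 * (T ^ (3:ℕ))⁻¹ * (V ^ (5:ℕ))⁻¹ :=
              mul_le_mul_of_nonneg_right hinv hV5
          _ ≤ 64 * (T ^ (3:ℕ))⁻¹ * ((V ^ (5:ℕ))⁻¹ + t^3 * (D ^ (5:ℕ))⁻¹) :=
              mul_le_mul_of_nonneg_left (le_add_of_nonneg_right hsum2)
                (mul_nonneg (by norm_num) hTi)
      · exact ⟨3, 5, by norm_num, hcaseD (by nlinarith)⟩
    · rcases le_total D (t * V) with hc | hc
      · -- the kinetic factor dominates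
        refine ⟨5, 3, by norm_num, ?_⟩
        have htV1 : 1 ≤ t * V := by nlinarith
        have hT4 : T ≤ 4 * (t * V) := by nlinarith
        have hcube : T ^ (3:ℕ) ≤ (64 * t^3) * V ^ (3:ℕ) := by
          have := pow_le_pow_left₀ hTpos.le hT4 3
          calc T ^ (3:ℕ) ≤ (4 * (t * V)) ^ (3:ℕ) := this
            _ = (64 * t^3) * V ^ (3:ℕ) := by ring
        have hinv : (V ^ (3:ℕ))⁻¹ ≤ (64 * t^3) * (T ^ (3:ℕ))⁻¹ :=
          inv_helper hT3pos (pow_pos hVpos 3) hcube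
        calc (D ^ (5:ℕ) * V ^ (3:ℕ))⁻¹ = (V ^ (3:ℕ))⁻¹ * (D ^ (5:ℕ))⁻¹ := by
              rw [mul_inv, mul_comm]
          _ ≤ ((64 * t^3) * (T ^ (3:ℕ))⁻¹) * (D ^ (5:ℕ))⁻¹ :=
              mul_le_mul_of_nonneg_right hinv hD5
          _ = 64 * (T ^ (3:ℕ))⁻¹ * (t^3 * (D ^ (5:ℕ))⁻¹) := by ring
          _ ≤ 64 * (T ^ (3:ℕ))⁻¹ * ((V ^ (5:ℕ))⁻¹ + t^3 * (D ^ (5:ℕ))⁻¹) :=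
              mul_le_mul_of_nonneg_left (le_add_of_nonneg_left hsum1)
                (mul_nonneg (by norm_num) hTi)
      · exact ⟨3, 5, by norm_num, hcaseD (by nlinarith)⟩
  -- integrability and value of the profile
  have hcompint : Integrable (fun v : E3 => t^3 * φ (x - t • v)) ∧
      (∫ v : E3, t^3 * φ (x - t • v)) ≤ I := by
    rcases eq_or_lt_of_le ht with h0 | h0
    · have hz : (fun v : E3 => t^3 * φ (x - t • v)) = fun _ => (0:ℝ) := by
        funext v; rw [← h0]; norm_num
      constructor
      · rw [hz]; exact integrable_zero _ _ _
      · rw [hz]; simp [hInn]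
    · have htne : t ≠ 0 := ne_of_gt h0
      have hrw : (fun v : E3 => φ (x - t • v)) =
          fun v : E3 => (fun u : E3 => φ (x + u)) ((-t) • v) := by
        funext v; simp [sub_eq_add_neg, neg_smul]
      have hψint : Integrable (fun u : E3 => φ (x + u)) := hφint.comp_add_left x
      have hcint : Integrable (fun v : E3 => φ (x - t • v)) := by
        rw [hrw]; exact hψint.comp_smul (neg_ne_zero.mpr htne)
      have hval : (∫ v : E3, φ (x - t • v)) = (t^3)⁻¹ * I := by
        rw [hrw, Measure.integral_comp_smul volume (fun u : E3 => φ (x + u)) (-t)]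
        have hfr : Module.finrank ℝ E3 = 3 := by simp
        rw [hfr, integral_add_left_eq_self (μ := volume) φ x]
        have habs : |((-t) ^ 3)⁻¹| = (t^3)⁻¹ := by
          rw [abs_inv, abs_pow, abs_neg, abs_of_pos h0]
        rw [habs, smul_eq_mul, hIdef]
      constructor
      · exact hcint.const_mul _
      · rw [integral_const_mul, hval]
        have : t^3 * ((t^3)⁻¹ * I) = I := by field_simp
        rw [this]
  obtain ⟨hcint2, hcval2⟩ := hcompint
  have hhint : Integrable (fun v : E3 =>
      2^16 * A * (T ^ (3:ℕ))⁻¹ * (φ v + t^3 * φ (x - t • v))) :=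
    (hφint.add hcint2).const_mul _
  have hile : (∫ v : E3, |g (x - t • v + Y v) (v + W v)| * jv v ^ 2) ≤
      ∫ v : E3, 2^16 * A * (T ^ (3:ℕ))⁻¹ * (φ v + t^3 * φ (x - t • v)) := by
    apply integral_mono_of_nonneg
    · exact ae_of_all _ fun v => mul_nonneg (abs_nonneg _) (sq_nonneg _)
    · exact hhint
    · exact ae_of_all _ fun v => hpt v
  calc (∫ v : E3, |g (x - t • v + Y v) (v + W v)| * jv v ^ 2)
      ≤ ∫ v : E3, 2^16 * A * (T ^ (3:ℕ))⁻¹ * (φ v + t^3 * φ (x - t • v)) := hile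
    _ = 2^16 * A * (T ^ (3:ℕ))⁻¹ * (I + ∫ v : E3, t^3 * φ (x - t • v)) := by
        rw [integral_const_mul, integral_add hφint hcint2, hIdef]
    _ ≤ 2^16 * A * (T ^ (3:ℕ))⁻¹ * (I + I) := by
        apply mul_le_mul_of_nonneg_left (add_le_add_right hcval2 I)
        exact mul_nonneg (mul_nonneg (by norm_num) hA.le) (inv_nonneg.mpr hT3pos.le)
    _ ≤ (2^17 * I + 1) * A * (T ^ (3:ℕ))⁻¹ := by
        have hZ : 0 < (T ^ (3:ℕ))⁻¹ := inv_pos.mpr hT3pos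
        nlinarith [mul_pos hA hZ, mul_nonneg (mul_nonneg hA.le hZ.le) hInn]

end
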